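/- (Gauss' divergence theorem for a parametrized 3-patch in ℝ³.) Let R = [a¹,b¹]×[a²,b²]×[a³,b³] ⊂ ℝ³, let x : U₀ → ℝ³ be a C² map on an open neighborhood U₀ of R whose partial derivatives x_i(s) = ∂x/∂sⁱ(s), i = 1,2,3, are linearly independent for every s ∈ R, and let F : U → ℝ³ be a C¹ vector field on an open set U containing x(R). Then ∫_R (div F)(x(s)) · det[x₁(s), x₂(s), x₃(s)] ds = ∑_{i=1}^{3} [ ∫_{R_i} ⟪F(x(s|sⁱ=bⁱ)), (x_{i+1} × x_{i+2})(s|sⁱ=bⁱ)⟫ ds_{(i)} − ∫_{R_i} ⟪F(x(s|sⁱ=aⁱ)), (x_{i+1} × x_{i+2})(s|sⁱ=aⁱ)⟫ ds_{(i)} ], where indices i+1, i+2 are taken cyclically in {1,2,3}, R_i = ∏_{j≠i}[aʲ,bʲ], s|sⁱ=c denotes the point of R with i-th coordinate c and remaining coordinates those of s ∈ R_i, ds_{(i)} is Lebesgue measure on R_i, div F = ∂₁F₁+∂₂F₂+∂₃F₃, and × is the cross product on ℝ³. -/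

import Mathlib

open MeasureTheory RealInnerProductSpace

noncomputable section

set_option maxHeartbeats 1000000

/-- The cross product on Euclidean 3-space. -/
def cross3 (u v : EuclideanSpace ℝ (Fin 3)) : EuclideanSpace ℝ (Fin 3) :=
  (WithLp.equiv 2 (Fin 3 → ℝ)).symm
    ![u 1 * v 2 - u 2 * v 1, u 2 * v 0 - u 0 * v 2, u 0 * v 1 - u 1 * v 0]

/-- `det[u,v,w]`, the determinant of the 3×3 matrix with columns `u`, `v`, `w`. -/
def det3 (u v w : EuclideanSpace ℝ (Fin 3)) : ℝ :=
  u 0 * (v 1 * w 2 - v 2 * w 1) - u 1 * (v 0 * w 2 - v 2 * w 0) + u 2 * (v 0 * w 1 - v 1 * w 0)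

/-- The point of `R` whose `i`-th coordinate is `c` and whose `(i+1)`-th and `(i+2)`-th
coordinates (cyclically) are `t.1` and `t.2`. -/
def facePt (i : Fin 3) (c : ℝ) (t : ℝ × ℝ) : Fin 3 → ℝ :=
  fun j => if j = i then c else if j = i + 1 then t.1 else t.2

theorem gauss_key2 (α β : Fin 2 → ℝ) (g : (Fin 2 → ℝ) → ℝ) :
      (∫ t in Set.Icc (α 0, α 1) (β 0, β 1), g (MeasurableEquiv.finTwoArrow.symm t))
        = ∫ y in Set.Icc α β, g y := by
  have hmp : MeasurePreserving (⇑(MeasurableEquiv.finTwoArrow (α := ℝ)).symm)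
      (volume : Measure (ℝ × ℝ)) volume :=
    (volume_preserving_finTwoArrow ℝ).symm _
  have hset : (⇑(MeasurableEquiv.finTwoArrow (α := ℝ)).symm) ⁻¹' Set.Icc α β
      = Set.Icc (α 0, α 1) (β 0, β 1) := by
    ext t
    simp [MeasurableEquiv.finTwoArrow, Set.mem_Icc, Pi.le_def, Fin.forall_fin_two,
      Prod.le_def]
  rw [← hset]
  exact hmp.setIntegral_preimage_emb
    (MeasurableEquiv.finTwoArrow (α := ℝ)).symm.measurableEmbedding g (Set.Icc α β)

theorem gauss_swap_integral (p q r w : ℝ) (g : ℝ × ℝ → ℝ) :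
    (∫ t in Set.Icc (p, q) (r, w), g t) = ∫ t in Set.Icc (q, p) (w, r), g t.swap := by
  have hmp : MeasurePreserving (Prod.swap : ℝ × ℝ → ℝ × ℝ) volume volume :=
    Measure.measurePreserving_swap
  have hset : (Prod.swap : ℝ × ℝ → ℝ × ℝ) ⁻¹' Set.Icc (p, q) (r, w)
      = Set.Icc (q, p) (w, r) := by
    ext t; simp [Set.mem_Icc, Prod.le_def]; tauto
  rw [← hmp.setIntegral_preimage_emb (MeasurableEquiv.prodComm (α := ℝ) (β := ℝ)).measurableEmbedding g _, hset]

theorem face_integral (a b : Fin 3 → ℝ) (i : Fin 3) (c : ℝ) (h : (Fin 3 → ℝ) → ℝ) :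
    (∫ t in Set.Icc (a (i + 1), a (i + 2)) (b (i + 1), b (i + 2)), h (facePt i c t))
      = ∫ y in Set.Icc (a ∘ i.succAbove) (b ∘ i.succAbove), h (i.insertNth c y) := by
  fin_cases i
  · show (∫ t in Set.Icc (a 1, a 2) (b 1, b 2), h (facePt 0 c t))
      = ∫ y in Set.Icc (a ∘ Fin.succAbove 0) (b ∘ Fin.succAbove 0), h ((0 : Fin 3).insertNth c y)
    rw [← gauss_key2 (a ∘ Fin.succAbove 0) (b ∘ Fin.succAbove 0)
      (fun y => h ((0 : Fin 3).insertNth c y))]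
    have : ∀ t : ℝ × ℝ, facePt 0 c t
        = (0 : Fin 3).insertNth c (MeasurableEquiv.finTwoArrow.symm t) := by
      intro t; funext j; fin_cases j <;> rfl
    simp only [this]; rfl
  · show (∫ t in Set.Icc (a 2, a 0) (b 2, b 0), h (facePt 1 c t))
      = ∫ y in Set.Icc (a ∘ Fin.succAbove 1) (b ∘ Fin.succAbove 1), h ((1 : Fin 3).insertNth c y)
    rw [gauss_swap_integral (a 2) (a 0) (b 2) (b 0) (fun t => h (facePt 1 c t)),
      ← gauss_key2 (a ∘ Fin.succAbove 1) (b ∘ Fin.succAbove 1)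
        (fun y => h ((1 : Fin 3).insertNth c y))]
    have : ∀ t : ℝ × ℝ, facePt 1 c t.swap
        = (1 : Fin 3).insertNth c (MeasurableEquiv.finTwoArrow.symm t) := by
      intro t; funext j; fin_cases j <;> rfl
    simp only [this]; rfl
  · show (∫ t in Set.Icc (a 0, a 1) (b 0, b 1), h (facePt 2 c t))
      = ∫ y in Set.Icc (a ∘ Fin.succAbove 2) (b ∘ Fin.succAbove 2), h ((2 : Fin 3).insertNth c y)
    rw [← gauss_key2 (a ∘ Fin.succAbove 2) (b ∘ Fin.succAbove 2)
      (fun y => h ((2 : Fin 3).insertNth c y))]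
    have : ∀ t : ℝ × ℝ, facePt 2 c t
        = (2 : Fin 3).insertNth c (MeasurableEquiv.finTwoArrow.symm t) := by
      intro t; funext j; fin_cases j <;> rfl
    simp only [this]; rfl

private theorem gauss_pointwise
    (U₀ : Set (Fin 3 → ℝ)) (hU₀ : IsOpen U₀)
    (x : (Fin 3 → ℝ) → EuclideanSpace ℝ (Fin 3)) (hx : ContDiffOn ℝ 2 x U₀)
    (xt : Fin 3 → (Fin 3 → ℝ) → EuclideanSpace ℝ (Fin 3))
    (hxt : ∀ i s, xt i s = fderiv ℝ x s (Pi.single i 1))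
    (U : Set (EuclideanSpace ℝ (Fin 3))) (hU : IsOpen U)
    (F : EuclideanSpace ℝ (Fin 3) → EuclideanSpace ℝ (Fin 3)) (hF : ContDiffOn ℝ 1 F U)
    (G : (Fin 3 → ℝ) → Fin 3 → ℝ)
    (hG : G = fun s i =>
      F (x s) 0 * (xt (i+1) s 1 * xt (i+2) s 2 - xt (i+1) s 2 * xt (i+2) s 1) +
      (F (x s) 1 * (xt (i+1) s 2 * xt (i+2) s 0 - xt (i+1) s 0 * xt (i+2) s 2) +
       F (x s) 2 * (xt (i+1) s 0 * xt (i+2) s 1 - xt (i+1) s 1 * xt (i+2) s 0)))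
    (s : Fin 3 → ℝ) (hsU₀ : s ∈ U₀) (hsU : x s ∈ U) :
    HasFDerivAt G (fderiv ℝ G s) s ∧
      ∑ i : Fin 3, fderiv ℝ G s (Pi.single i 1) i =
        (∑ i : Fin 3, fderiv ℝ F (x s) (EuclideanSpace.single i (1 : ℝ)) i) *
          det3 (xt 0 s) (xt 1 s) (xt 2 s) := by
  have hxd : HasFDerivAt x (fderiv ℝ x s) s :=
    (((hx.contDiffAt (hU₀.mem_nhds hsU₀)).differentiableAt (by norm_num)).hasFDerivAt)
  have hFd : HasFDerivAt F (fderiv ℝ F (x s)) (x s) :=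
    (((hF.contDiffAt (hU.mem_nhds hsU)).differentiableAt one_ne_zero).hasFDerivAt)
  have hgc : ContDiffOn ℝ 1 (fderiv ℝ x) U₀ := hx.fderiv_of_isOpen hU₀ (by norm_num)
  have hgd : HasFDerivAt (fderiv ℝ x) (fderiv ℝ (fderiv ℝ x) s) s :=
    (((hgc.contDiffAt (hU₀.mem_nhds hsU₀)).differentiableAt one_ne_zero).hasFDerivAt)
  have hsym : ∀ v w, fderiv ℝ (fderiv ℝ x) s v w = fderiv ℝ (fderiv ℝ x) s w v :=
    ((hx.contDiffAt (hU₀.mem_nhds hsU₀)).isSymmSndFDerivAt (by simp))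
  have hP : ∀ k : Fin 3, HasFDerivAt (fun s => F (x s) k)
      ((EuclideanSpace.proj k).comp ((fderiv ℝ F (x s)).comp (fderiv ℝ x s))) s := by
    intro k
    exact (EuclideanSpace.proj (𝕜 := ℝ) k).hasFDerivAt.comp s (hFd.comp s hxd)
  have hQ : ∀ (j k : Fin 3), HasFDerivAt (fun s => xt j s k)
      ((EuclideanSpace.proj k).comp
        ((ContinuousLinearMap.apply ℝ (EuclideanSpace ℝ (Fin 3)) ((Pi.single j 1 : Fin 3 → ℝ))).comp
          (fderiv ℝ (fderiv ℝ x) s))) s := by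
    intro j k
    have h1 : HasFDerivAt (fun s => fderiv ℝ x s (Pi.single j 1))
        ((ContinuousLinearMap.apply ℝ (EuclideanSpace ℝ (Fin 3)) ((Pi.single j 1 : Fin 3 → ℝ))).comp
          (fderiv ℝ (fderiv ℝ x) s)) s :=
      (ContinuousLinearMap.apply ℝ (EuclideanSpace ℝ (Fin 3))
        ((Pi.single j 1 : Fin 3 → ℝ))).hasFDerivAt.comp s hgd
    have h2 := (EuclideanSpace.proj (𝕜 := ℝ) k).hasFDerivAt.comp s h1
    have hfun : (fun s => xt j s k)
        = fun s => (fderiv ℝ x s (Pi.single j 1) : EuclideanSpace ℝ (Fin 3)) k := by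
      funext s; rw [hxt]
    rw [hfun]
    exact h2
  have hGi : ∀ i : Fin 3, DifferentiableAt ℝ (fun s => G s i) s ∧
      fderiv ℝ (fun s => G s i) s (Pi.single i 1) =
        (fderiv ℝ F (x s) (fderiv ℝ x s (Pi.single i 1)) 0) *
            (xt (i+1) s 1 * xt (i+2) s 2 - xt (i+1) s 2 * xt (i+2) s 1)
        + (fderiv ℝ F (x s) (fderiv ℝ x s (Pi.single i 1)) 1) *
            (xt (i+1) s 2 * xt (i+2) s 0 - xt (i+1) s 0 * xt (i+2) s 2)
        + (fderiv ℝ F (x s) (fderiv ℝ x s (Pi.single i 1)) 2) *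
            (xt (i+1) s 0 * xt (i+2) s 1 - xt (i+1) s 1 * xt (i+2) s 0)
        + F (x s) 0 * (fderiv ℝ (fderiv ℝ x) s (Pi.single i 1) (Pi.single (i+1) 1) 1 * xt (i+2) s 2
            + xt (i+1) s 1 * fderiv ℝ (fderiv ℝ x) s (Pi.single i 1) (Pi.single (i+2) 1) 2
            - (fderiv ℝ (fderiv ℝ x) s (Pi.single i 1) (Pi.single (i+1) 1) 2 * xt (i+2) s 1
            + xt (i+1) s 2 * fderiv ℝ (fderiv ℝ x) s (Pi.single i 1) (Pi.single (i+2) 1) 1))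
        + F (x s) 1 * (fderiv ℝ (fderiv ℝ x) s (Pi.single i 1) (Pi.single (i+1) 1) 2 * xt (i+2) s 0
            + xt (i+1) s 2 * fderiv ℝ (fderiv ℝ x) s (Pi.single i 1) (Pi.single (i+2) 1) 0
            - (fderiv ℝ (fderiv ℝ x) s (Pi.single i 1) (Pi.single (i+1) 1) 0 * xt (i+2) s 2
            + xt (i+1) s 0 * fderiv ℝ (fderiv ℝ x) s (Pi.single i 1) (Pi.single (i+2) 1) 2))
        + F (x s) 2 * (fderiv ℝ (fderiv ℝ x) s (Pi.single i 1) (Pi.single (i+1) 1) 0 * xt (i+2) s 1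
            + xt (i+1) s 0 * fderiv ℝ (fderiv ℝ x) s (Pi.single i 1) (Pi.single (i+2) 1) 1
            - (fderiv ℝ (fderiv ℝ x) s (Pi.single i 1) (Pi.single (i+1) 1) 1 * xt (i+2) s 0
            + xt (i+1) s 1 * fderiv ℝ (fderiv ℝ x) s (Pi.single i 1) (Pi.single (i+2) 1) 0)) := by
    intro i
    have hd := (((hP 0).mul (((hQ (i+1) 1).mul (hQ (i+2) 2)).sub ((hQ (i+1) 2).mul (hQ (i+2) 1)))).add
     (((hP 1).mul (((hQ (i+1) 2).mul (hQ (i+2) 0)).sub ((hQ (i+1) 0).mul (hQ (i+2) 2)))).add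
      ((hP 2).mul (((hQ (i+1) 0).mul (hQ (i+2) 1)).sub ((hQ (i+1) 1).mul (hQ (i+2) 0))))))
    have hGeq : (fun s => G s i) = (fun s =>
      F (x s) 0 * (xt (i+1) s 1 * xt (i+2) s 2 - xt (i+1) s 2 * xt (i+2) s 1) +
      (F (x s) 1 * (xt (i+1) s 2 * xt (i+2) s 0 - xt (i+1) s 0 * xt (i+2) s 2) +
       F (x s) 2 * (xt (i+1) s 0 * xt (i+2) s 1 - xt (i+1) s 1 * xt (i+2) s 0))) := by
      funext s; rw [hG]
    rw [hGeq]
    refine ⟨hd.differentiableAt, ?_⟩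
    erw [hd.fderiv]
    simp only [ContinuousLinearMap.add_apply, ContinuousLinearMap.smul_apply,
      ContinuousLinearMap.sub_apply, ContinuousLinearMap.comp_apply,
      ContinuousLinearMap.coe_comp', Function.comp_apply,
      ContinuousLinearMap.apply_apply, PiLp.proj_apply, smul_eq_mul, Pi.mul_apply, Pi.sub_apply]
    ring
  have hDFu : ∀ (u : EuclideanSpace ℝ (Fin 3)) (k : Fin 3),
      fderiv ℝ F (x s) u k =
        u 0 * fderiv ℝ F (x s) (EuclideanSpace.single 0 (1:ℝ)) k
        + u 1 * fderiv ℝ F (x s) (EuclideanSpace.single 1 (1:ℝ)) k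
        + u 2 * fderiv ℝ F (x s) (EuclideanSpace.single 2 (1:ℝ)) k := by
    intro u k
    have hu : u = u 0 • EuclideanSpace.single (0 : Fin 3) (1:ℝ)
        + u 1 • EuclideanSpace.single (1 : Fin 3) (1:ℝ)
        + u 2 • EuclideanSpace.single (2 : Fin 3) (1:ℝ) := by
      ext j; fin_cases j <;> simp [EuclideanSpace.single_apply]
    conv_lhs => rw [hu]
    simp [PiLp.add_apply, PiLp.smul_apply, smul_eq_mul]
  constructor
  · exact (differentiableAt_pi.2 (fun i => (hGi i).1)).hasFDerivAt
  · have hfp : fderiv ℝ G s = ContinuousLinearMap.pi (fun i => fderiv ℝ (fun s => G s i) s) :=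
      fderiv_pi (fun i => (hGi i).1)
    rw [hfp]
    simp only [ContinuousLinearMap.pi_apply, Fin.sum_univ_three]
    rw [(hGi 0).2, (hGi 1).2, (hGi 2).2]
    simp only [show ((0:Fin 3)+1) = 1 from rfl, show ((0:Fin 3)+2) = 2 from rfl,
      show ((1:Fin 3)+1) = 2 from rfl, show ((1:Fin 3)+2) = 0 from rfl,
      show ((2:Fin 3)+1) = 0 from rfl, show ((2:Fin 3)+2) = 1 from rfl]
    simp only [← hxt]
    simp only [hDFu (xt 0 s), hDFu (xt 1 s), hDFu (xt 2 s)]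
    have c10 := hsym (Pi.single (1 : Fin 3) (1:ℝ)) (Pi.single (0 : Fin 3) (1:ℝ))
    have c20 := hsym (Pi.single (2 : Fin 3) (1:ℝ)) (Pi.single (0 : Fin 3) (1:ℝ))
    have c21 := hsym (Pi.single (2 : Fin 3) (1:ℝ)) (Pi.single (1 : Fin 3) (1:ℝ))
    simp only [det3, c10, c20, c21]
    ring


/-- Gauss' divergence theorem for a parametrized 3-patch in ℝ³:
`∫_R (div F)(x(s))·det[x₁,x₂,x₃](s) ds` equals the sum over the six faces of the outward
flux terms `±∫ ⟪F∘x, x_{i+1}×x_{i+2}⟫`. -/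
theorem gauss_divergence_theorem
    (a b : Fin 3 → ℝ) (hab : ∀ i, a i < b i)
    (U₀ : Set (Fin 3 → ℝ)) (hU₀ : IsOpen U₀) (hRU₀ : Set.Icc a b ⊆ U₀)
    (x : (Fin 3 → ℝ) → EuclideanSpace ℝ (Fin 3)) (hx : ContDiffOn ℝ 2 x U₀)
    (xt : Fin 3 → (Fin 3 → ℝ) → EuclideanSpace ℝ (Fin 3))
    (hxt : ∀ i s, xt i s = fderiv ℝ x s (Pi.single i 1))
    (hreg : ∀ s ∈ Set.Icc a b, LinearIndependent ℝ (fun i => xt i s))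
    (U : Set (EuclideanSpace ℝ (Fin 3))) (hU : IsOpen U) (hxRU : x '' Set.Icc a b ⊆ U)
    (F : EuclideanSpace ℝ (Fin 3) → EuclideanSpace ℝ (Fin 3)) (hF : ContDiffOn ℝ 1 F U) :
    (∫ s in Set.Icc a b,
        (∑ i : Fin 3, fderiv ℝ F (x s) (EuclideanSpace.single i (1 : ℝ)) i) *
          det3 (xt 0 s) (xt 1 s) (xt 2 s))
      = ∑ i : Fin 3,
          ((∫ t in Set.Icc (a (i + 1), a (i + 2)) (b (i + 1), b (i + 2)),
              ⟪F (x (facePt i (b i) t)),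
                cross3 (xt (i + 1) (facePt i (b i) t)) (xt (i + 2) (facePt i (b i) t))⟫)
            - (∫ t in Set.Icc (a (i + 1), a (i + 2)) (b (i + 1), b (i + 2)),
              ⟪F (x (facePt i (a i) t)),
                cross3 (xt (i + 1) (facePt i (a i) t)) (xt (i + 2) (facePt i (a i) t))⟫)) := by
  -- the open set on which everything is defined
  set V : Set (Fin 3 → ℝ) := U₀ ∩ x ⁻¹' U with hVdef
  have hVopen : IsOpen V := hx.continuousOn.isOpen_inter_preimage hU₀ hU
  have hIccV : Set.Icc a b ⊆ V := fun s hs => ⟨hRU₀ hs, hxRU ⟨s, hs, rfl⟩⟩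
  set G : (Fin 3 → ℝ) → Fin 3 → ℝ := fun s i =>
      F (x s) 0 * (xt (i+1) s 1 * xt (i+2) s 2 - xt (i+1) s 2 * xt (i+2) s 1) +
      (F (x s) 1 * (xt (i+1) s 2 * xt (i+2) s 0 - xt (i+1) s 0 * xt (i+2) s 2) +
       F (x s) 2 * (xt (i+1) s 0 * xt (i+2) s 1 - xt (i+1) s 1 * xt (i+2) s 0)) with hGdef
  have main : ∀ s ∈ V, HasFDerivAt G (fderiv ℝ G s) s ∧
      ∑ i : Fin 3, fderiv ℝ G s (Pi.single i 1) i =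
        (∑ i : Fin 3, fderiv ℝ F (x s) (EuclideanSpace.single i (1 : ℝ)) i) *
          det3 (xt 0 s) (xt 1 s) (xt 2 s) :=
    fun s hs => gauss_pointwise U₀ hU₀ x hx xt hxt U hU F hF G hGdef s hs.1 hs.2
  have hGinner : ∀ (s : Fin 3 → ℝ) (i : Fin 3),
      (⟪F (x s), cross3 (xt (i+1) s) (xt (i+2) s)⟫ : ℝ) = G s i := by
    intro s i
    rw [hGdef]
    simp only [cross3, PiLp.inner_apply, RCLike.inner_apply, conj_trivial,
      Fin.sum_univ_three, WithLp.equiv_symm_apply, PiLp.toLp_apply, Matrix.cons_val_zero,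
      Matrix.cons_val_one, Matrix.head_cons, Matrix.cons_val_two, Matrix.tail_cons]
    ring
  -- continuity facts
  have hxtc : ∀ j, ContinuousOn (xt j) U₀ := by
    intro j
    have h1 : ContinuousOn (fun s => fderiv ℝ x s (Pi.single j 1)) U₀ :=
      (hx.continuousOn_fderiv_of_isOpen hU₀ (by norm_num)).clm_apply continuousOn_const
    exact h1.congr (fun s _ => hxt j s)
  have cQ : ∀ (j k : Fin 3), ContinuousOn (fun s => xt j s k) V := fun j k =>
    (EuclideanSpace.proj (𝕜 := ℝ) k).continuous.comp_continuousOn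
      ((hxtc j).mono Set.inter_subset_left)
  have hFxc : ContinuousOn (fun s => F (x s)) V :=
    hF.continuousOn.comp (hx.continuousOn.mono Set.inter_subset_left) (fun s hs => hs.2)
  have cP : ∀ k : Fin 3, ContinuousOn (fun s => F (x s) k) V := fun k =>
    (EuclideanSpace.proj (𝕜 := ℝ) k).continuous.comp_continuousOn hFxc
  have hGc : ContinuousOn G (Set.Icc a b) := by
    rw [hGdef]
    refine (continuousOn_pi.2 fun i => ?_).mono hIccV
    exact ((cP 0).mul (((cQ (i+1) 1).mul (cQ (i+2) 2)).sub ((cQ (i+1) 2).mul (cQ (i+2) 1)))).add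
      ((((cP 1).mul (((cQ (i+1) 2).mul (cQ (i+2) 0)).sub ((cQ (i+1) 0).mul (cQ (i+2) 2))))).add
        ((cP 2).mul (((cQ (i+1) 0).mul (cQ (i+2) 1)).sub ((cQ (i+1) 1).mul (cQ (i+2) 0)))))
  have hWc : ContinuousOn (fun s =>
      (∑ i : Fin 3, fderiv ℝ F (x s) (EuclideanSpace.single i (1 : ℝ)) i) *
        det3 (xt 0 s) (xt 1 s) (xt 2 s)) V := by
    have hdFc : ContinuousOn (fun s => fderiv ℝ F (x s)) V :=
      (hF.continuousOn_fderiv_of_isOpen hU le_rfl).comp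
        (hx.continuousOn.mono Set.inter_subset_left) (fun s hs => hs.2)
    have hterm : ∀ i : Fin 3,
        ContinuousOn (fun s => fderiv ℝ F (x s) (EuclideanSpace.single i (1 : ℝ)) i) V :=
      fun i => (EuclideanSpace.proj (𝕜 := ℝ) i).continuous.comp_continuousOn
        (hdFc.clm_apply continuousOn_const)
    refine ContinuousOn.mul ?_ ?_
    · exact continuousOn_finset_sum _ (fun i _ => hterm i)
    · simp only [det3]
      exact (((cQ 0 0).mul (((cQ 1 1).mul (cQ 2 2)).sub ((cQ 1 2).mul (cQ 2 1)))).sub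
        ((cQ 0 1).mul (((cQ 1 0).mul (cQ 2 2)).sub ((cQ 1 2).mul (cQ 2 0))))).add
        ((cQ 0 2).mul (((cQ 1 0).mul (cQ 2 1)).sub ((cQ 1 1).mul (cQ 2 0))))
  -- integrability of the divergence
  have hWint : IntegrableOn (fun s =>
      (∑ i : Fin 3, fderiv ℝ F (x s) (EuclideanSpace.single i (1 : ℝ)) i) *
        det3 (xt 0 s) (xt 1 s) (xt 2 s)) (Set.Icc a b) volume :=
    (hWc.mono hIccV).integrableOn_compact isCompact_Icc
  have hEq : Set.EqOn (fun s =>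
      (∑ i : Fin 3, fderiv ℝ F (x s) (EuclideanSpace.single i (1 : ℝ)) i) *
        det3 (xt 0 s) (xt 1 s) (xt 2 s))
      (fun s => ∑ i : Fin 3, fderiv ℝ G s (Pi.single i 1) i) (Set.Icc a b) :=
    fun s hs => ((main s (hIccV hs)).2).symm
  have Hi : IntegrableOn (fun s => ∑ i : Fin 3, fderiv ℝ G s (Pi.single i 1) i)
      (Set.Icc a b) volume :=
    hWint.congr_fun hEq measurableSet_Icc
  have Hd : ∀ y ∈ (Set.univ.pi fun i => Set.Ioo (a i) (b i)) \ (∅ : Set (Fin 3 → ℝ)),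
      HasFDerivAt G (fderiv ℝ G y) y := by
    intro y hy
    have hy' : y ∈ Set.Icc a b :=
      ⟨fun i => (hy.1 i trivial).1.le, fun i => (hy.1 i trivial).2.le⟩
    exact (main y (hIccV hy')).1
  have hdiv := integral_divergence_of_hasFDerivAt_off_countable (n := 2) a b
    (Pi.le_def.2 fun i => (hab i).le) G (fun s => fderiv ℝ G s) ∅ Set.countable_empty
    hGc Hd Hi
  calc (∫ s in Set.Icc a b,
        (∑ i : Fin 3, fderiv ℝ F (x s) (EuclideanSpace.single i (1 : ℝ)) i) *
          det3 (xt 0 s) (xt 1 s) (xt 2 s))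
      = ∫ s in Set.Icc a b, ∑ i : Fin 3, fderiv ℝ G s (Pi.single i 1) i :=
        setIntegral_congr_fun measurableSet_Icc hEq
    _ = ∑ i : Fin 3,
          ((∫ y in Set.Icc (a ∘ i.succAbove) (b ∘ i.succAbove), G (i.insertNth (b i) y) i) -
            ∫ y in Set.Icc (a ∘ i.succAbove) (b ∘ i.succAbove), G (i.insertNth (a i) y) i) := hdiv
    _ = _ := by
        refine Finset.sum_congr rfl fun i _ => ?_
        rw [← face_integral a b i (b i) (fun y => G y i),
          ← face_integral a b i (a i) (fun y => G y i)]
        simp only [hGinner]
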